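/- For n, d ∈ ℕ with n ≥ 2, the hyperbolic cross index set Λ_{n,d}^{HC} = { ν ∈ ℕ₀^d : ∏_{k=1}^d (ν_k + 1) ≤ n } satisfies |Λ_{n,d}^{HC}| ≤ e · n^{2 + log(d)/log(2)}. -/

import Mathlib

open Finset in
private lemma hcT_card (d L : ℕ) (hd : 1 ≤ d) :
    (Finset.filter (fun b : Fin d → ℕ => ∑ k, b k ≤ L)
      (Fintype.piFinset fun _ => Finset.range (L + 1))).card ≤ (L + 1) * d ^ L := by
  classical
  set z : Fin d := ⟨0, hd⟩
  set lst : (Fin d → ℕ) → List (Fin d) := fun b =>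
    (List.finRange d).flatMap fun k => List.replicate (b k) k with hlst
  have hlen : ∀ b : Fin d → ℕ, (lst b).length = ∑ k, b k := by
    intro b
    simp only [hlst, List.length_flatMap]
    rw [Fin.sum_univ_def]
    congr 1
    simp [Function.comp]
  have hcount : ∀ (b : Fin d → ℕ) (k : Fin d), (lst b).count k = b k := by
    intro b k
    simp only [hlst, List.count_flatMap]
    have : (List.count k ∘ fun j => List.replicate (b j) j)
        = fun j => if j = k then b j else 0 := by
      funext j; simp [Function.comp, List.count_replicate]
    rw [this, ← Fin.sum_univ_def]
    simp
  -- the recovery: from (s, f) get lst b back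
  have key : ∀ b : Fin d → ℕ, ∑ k, b k ≤ L →
      (List.ofFn fun i : Fin L => (lst b).getD i z).take (∑ k, b k) = lst b := by
    intro b hb
    apply List.ext_getElem
    · simp [hlen b, hb]
    · intro i h1 h2
      have hiL : i < L := lt_of_lt_of_le (by simpa [hlen b] using h2) hb
      simp [List.getElem_take, List.getElem_ofFn, List.getD_eq_getElem, h2, hiL]
  have hinj : Set.InjOn
      (fun b : Fin d → ℕ => ((∑ k, b k), fun i : Fin L => (lst b).getD i z))
      ((Fintype.piFinset fun _ : Fin d => Finset.range (L + 1)).filter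
        (fun b => ∑ k, b k ≤ L)) := by
    intro b hb b' hb' h
    have hs : (∑ k, b k) = ∑ k, b' k := congrArg Prod.fst h
    have hf : (fun i : Fin L => (lst b).getD i z) = fun i : Fin L => (lst b').getD i z :=
      congrArg Prod.snd h
    have hbL : ∑ k, b k ≤ L := (Finset.mem_filter.1 hb).2
    have hb'L : ∑ k, b' k ≤ L := (Finset.mem_filter.1 hb').2
    have : lst b = lst b' := by
      rw [← key b hbL, ← key b' hb'L, hf, hs]
    funext k
    rw [← hcount b k, ← hcount b' k, this]
  calc (Finset.filter (fun b : Fin d → ℕ => ∑ k, b k ≤ L)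
      (Fintype.piFinset fun _ => Finset.range (L + 1))).card
      ≤ ((Finset.range (L + 1)) ×ˢ (Fintype.piFinset fun _ : Fin L =>
          (Finset.univ : Finset (Fin d)))).card := by
        apply Finset.card_le_card_of_injOn _ _ hinj
        intro b hb
        have hbL : ∑ k, b k ≤ L := (Finset.mem_filter.1 hb).2
        simp [Finset.mem_product, Nat.lt_succ_iff, hbL]
    _ = (L + 1) * d ^ L := by
        simp [Finset.card_product, Fintype.card_piFinset]

open Finset in
private lemma hcF_card (d n : ℕ) (hn : 2 ≤ n) :
    (Finset.filter (fun ν : Fin d → ℕ => ∏ k, (ν k + 1) ≤ n)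
      (Fintype.piFinset fun _ => Finset.range n)).card ≤
    (Finset.filter (fun b : Fin d → ℕ => ∑ k, b k ≤ Nat.log 2 n)
      (Fintype.piFinset fun _ => Finset.range (Nat.log 2 n + 1))).card * n := by
  classical
  set L := Nat.log 2 n with hL
  have hn0 : n ≠ 0 := by omega
  set T := Finset.filter (fun b : Fin d → ℕ => ∑ k, b k ≤ L)
      (Fintype.piFinset fun _ => Finset.range (L + 1)) with hT
  -- the log-vector of ν lies in T
  have hbmem : ∀ ν : Fin d → ℕ, (∏ k, (ν k + 1) ≤ n) →
      (fun k => Nat.log 2 (ν k + 1)) ∈ T := by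
    intro ν hν
    have hsum : (2 : ℕ) ^ (∑ k, Nat.log 2 (ν k + 1)) ≤ n := by
      rw [← Finset.prod_pow_eq_pow_sum]
      calc ∏ k, (2:ℕ) ^ Nat.log 2 (ν k + 1) ≤ ∏ k, (ν k + 1) :=
            Finset.prod_le_prod' fun k _ => Nat.pow_log_le_self 2 (Nat.succ_ne_zero _)
        _ ≤ n := hν
    have hsL : ∑ k, Nat.log 2 (ν k + 1) ≤ L :=
      (Nat.le_log_iff_pow_le one_lt_two hn0).2 hsum
    rw [hT, Finset.mem_filter]
    refine ⟨Fintype.mem_piFinset.2 fun k => ?_, hsL⟩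
    rw [Finset.mem_range, Nat.lt_succ_iff]
    exact le_trans (Finset.single_le_sum (f := fun k => Nat.log 2 (ν k + 1))
      (fun _ _ => Nat.zero_le _) (Finset.mem_univ k)) hsL
  calc (Finset.filter (fun ν : Fin d → ℕ => ∏ k, (ν k + 1) ≤ n)
        (Fintype.piFinset fun _ => Finset.range n)).card
      ≤ (T.sigma fun b => Fintype.piFinset fun k => Finset.range (2 ^ b k)).card := by
        apply Finset.card_le_card_of_injOn
          (fun ν => ⟨fun k => Nat.log 2 (ν k + 1),
            fun k => ν k + 1 - 2 ^ Nat.log 2 (ν k + 1)⟩)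
        · intro ν hν
          have hν' : ∏ k, (ν k + 1) ≤ n := (Finset.mem_filter.1 hν).2
          rw [Finset.mem_coe, Finset.mem_sigma]
          refine ⟨hbmem ν hν', Fintype.mem_piFinset.2 fun k => Finset.mem_range.2 ?_⟩
          show ν k + 1 - 2 ^ Nat.log 2 (ν k + 1) < 2 ^ Nat.log 2 (ν k + 1)
          have h1 : 2 ^ Nat.log 2 (ν k + 1) ≤ ν k + 1 :=
            Nat.pow_log_le_self 2 (Nat.succ_ne_zero _)
          have h2 : ν k + 1 < 2 ^ (Nat.log 2 (ν k + 1) + 1) :=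
            Nat.lt_pow_succ_log_self one_lt_two _
          rw [pow_succ] at h2
          omega
        · intro ν hν ν' hν' h
          have hb : (fun k => Nat.log 2 (ν k + 1)) = fun k => Nat.log 2 (ν' k + 1) :=
            congrArg Sigma.fst h
          have hr : (fun k => ν k + 1 - 2 ^ Nat.log 2 (ν k + 1))
              = fun k => ν' k + 1 - 2 ^ Nat.log 2 (ν' k + 1) := by
            have := (Sigma.mk.inj_iff.1 h).2
            exact eq_of_heq this
          funext k
          have h1 : 2 ^ Nat.log 2 (ν k + 1) ≤ ν k + 1 :=
            Nat.pow_log_le_self 2 (Nat.succ_ne_zero _)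
          have h1' : 2 ^ Nat.log 2 (ν' k + 1) ≤ ν' k + 1 :=
            Nat.pow_log_le_self 2 (Nat.succ_ne_zero _)
          have e1 : Nat.log 2 (ν k + 1) = Nat.log 2 (ν' k + 1) := congrFun hb k
          have e2 : ν k + 1 - 2 ^ Nat.log 2 (ν k + 1)
              = ν' k + 1 - 2 ^ Nat.log 2 (ν' k + 1) := congrFun hr k
          rw [e1] at h1 e2
          omega
    _ = ∑ b ∈ T, (Fintype.piFinset fun k => Finset.range (2 ^ b k)).card :=
        Finset.card_sigma _ _
    _ ≤ ∑ _b ∈ T, n := by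
        apply Finset.sum_le_sum
        intro b hb
        rw [Fintype.card_piFinset]
        simp only [Finset.card_range]
        rw [Finset.prod_pow_eq_pow_sum]
        calc (2:ℕ) ^ (∑ k, b k) ≤ 2 ^ L :=
              Nat.pow_le_pow_right (by norm_num) (Finset.mem_filter.1 hb).2
          _ ≤ n := Nat.pow_log_le_self 2 hn0
    _ = T.card * n := by rw [Finset.sum_const, smul_eq_mul]

open Finset in
private lemma hc_set_eq (d n : ℕ) :
    {ν : Fin d → ℕ | ∏ k, (ν k + 1) ≤ n} =
      ↑(Finset.filter (fun ν : Fin d → ℕ => ∏ k, (ν k + 1) ≤ n)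
        (Fintype.piFinset fun _ => Finset.range n)) := by
  ext ν
  simp only [Set.mem_setOf_eq, Finset.coe_filter, Fintype.mem_piFinset, Finset.mem_range]
  constructor
  · intro h
    refine ⟨fun k => ?_, h⟩
    have h1 : ν k + 1 ≤ ∏ j, (ν j + 1) :=
      Finset.single_le_prod' (fun j _ => Nat.succ_le_succ (Nat.zero_le _)) (Finset.mem_univ k)
    omega
  · exact fun h => h.2

private lemma hc_real_bound (d n : ℕ) (hd : 1 ≤ d) (hn : 2 ≤ n) :
    (((Nat.log 2 n + 1) * d ^ Nat.log 2 n * n : ℕ) : ℝ) ≤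
      Real.exp 1 * (n : ℝ) ^ ((2 : ℝ) + Real.log d / Real.log 2) := by
  set L := Nat.log 2 n with hL
  have hn0 : n ≠ 0 := by omega
  have hnR : (2 : ℝ) ≤ (n : ℝ) := by exact_mod_cast hn
  have hnpos : (0 : ℝ) < n := by linarith
  have hdR : (1 : ℝ) ≤ (d : ℝ) := by exact_mod_cast hd
  have hlog2 : (0 : ℝ) < Real.log 2 := Real.log_pos (by norm_num)
  have hlogd : (0 : ℝ) ≤ Real.log d := Real.log_nonneg hdR
  -- L + 1 ≤ n
  have hLn : ((L : ℝ) + 1) ≤ (n : ℝ) := by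
    have := Nat.log_lt_self 2 hn0
    exact_mod_cast this
  -- d ^ L ≤ n ^ (log d / log 2)
  have hpow : ((d : ℝ)) ^ L ≤ (n : ℝ) ^ (Real.log d / Real.log 2) := by
    have h2L : ((2 : ℝ)) ^ L ≤ (n : ℝ) := by
      exact_mod_cast Nat.pow_log_le_self 2 hn0
    have hLlog : (L : ℝ) * Real.log 2 ≤ Real.log n := by
      calc (L : ℝ) * Real.log 2 = Real.log ((2 : ℝ) ^ L) := by rw [Real.log_pow]
        _ ≤ Real.log n := Real.log_le_log (by positivity) h2L
    have hLle : (L : ℝ) ≤ Real.log n / Real.log 2 := (le_div_iff₀ hlog2).2 hLlog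
    have hdpos : (0 : ℝ) < d := by linarith
    rw [← Real.rpow_natCast (d : ℝ) L, Real.rpow_def_of_pos hdpos,
      Real.rpow_def_of_pos hnpos]
    apply Real.exp_le_exp.2
    have : (L : ℝ) * Real.log d ≤ (Real.log n / Real.log 2) * Real.log d :=
      mul_le_mul_of_nonneg_right hLle hlogd
    calc Real.log (d : ℝ) * (L : ℝ) = (L : ℝ) * Real.log d := by ring
      _ ≤ Real.log n / Real.log 2 * Real.log d := this
      _ = Real.log (n : ℝ) * (Real.log d / Real.log 2) := by ring
  have hsplit : (n : ℝ) ^ ((2 : ℝ) + Real.log d / Real.log 2)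
      = (n : ℝ) ^ (2 : ℝ) * (n : ℝ) ^ (Real.log d / Real.log 2) :=
    Real.rpow_add hnpos _ _
  have h2 : (n : ℝ) ^ (2 : ℝ) = (n : ℝ) * (n : ℝ) := by
    rw [show (2 : ℝ) = ((2 : ℕ) : ℝ) by norm_num, Real.rpow_natCast]; ring
  have hexp : (1 : ℝ) ≤ Real.exp 1 := by
    have := Real.add_one_le_exp (1 : ℝ); linarith
  push_cast
  rw [hsplit, h2]
  have hrpow_nonneg : (0 : ℝ) ≤ (n : ℝ) ^ (Real.log d / Real.log 2) :=
    Real.rpow_nonneg (le_of_lt hnpos) _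
  calc ((L : ℝ) + 1) * (d : ℝ) ^ L * (n : ℝ)
      ≤ (n : ℝ) * ((n : ℝ) ^ (Real.log d / Real.log 2)) * (n : ℝ) := by
        apply mul_le_mul_of_nonneg_right _ (le_of_lt hnpos)
        apply mul_le_mul hLn hpow (by positivity) (by positivity)
    _ = 1 * ((n : ℝ) * (n : ℝ) * (n : ℝ) ^ (Real.log d / Real.log 2)) := by ring
    _ ≤ Real.exp 1 * ((n : ℝ) * (n : ℝ) * (n : ℝ) ^ (Real.log d / Real.log 2)) := by
        apply mul_le_mul_of_nonneg_right hexp (by positivity)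

/-- Cardinality bound for the hyperbolic cross index set:
`|Λ^HC_{n,d}| ≤ e · n^{2 + log d / log 2}` for `n ≥ 2`. -/
theorem hyperbolic_cross_card_le' (d n : ℕ) (hd : 1 ≤ d) (hn : 2 ≤ n) :
    {ν : Fin d → ℕ | ∏ k, (ν k + 1) ≤ n}.Finite ∧
      ({ν : Fin d → ℕ | ∏ k, (ν k + 1) ≤ n}.ncard : ℝ) ≤
        Real.exp 1 * (n : ℝ) ^ ((2 : ℝ) + Real.log d / Real.log 2) := by
  classical
  rw [hc_set_eq d n]
  refine ⟨Finset.finite_toSet _, ?_⟩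
  rw [Set.ncard_coe_finset]
  have h1 := hcF_card d n hn
  have h2 := hcT_card d (Nat.log 2 n) hd
  have hN : (Finset.filter (fun ν : Fin d → ℕ => ∏ k, (ν k + 1) ≤ n)
      (Fintype.piFinset fun _ => Finset.range n)).card ≤
      (Nat.log 2 n + 1) * d ^ Nat.log 2 n * n :=
    le_trans h1 (Nat.mul_le_mul_right n h2)
  calc ((Finset.filter (fun ν : Fin d → ℕ => ∏ k, (ν k + 1) ≤ n)
        (Fintype.piFinset fun _ => Finset.range n)).card : ℝ)
      ≤ (((Nat.log 2 n + 1) * d ^ Nat.log 2 n * n : ℕ) : ℝ) := by exact_mod_cast hN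
    _ ≤ Real.exp 1 * (n : ℝ) ^ ((2 : ℝ) + Real.log d / Real.log 2) :=
        hc_real_bound d n hd hn
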